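/- Let b be a nondegenerate symmetric bilinear form of signature (p, q+1) on ℝ^{p+q+1}, n = p+q+1, and let x_1,…,x_n be a basis of ℝ^{p+q+1} with b(x_i, x_j) ≤ 0 for all i, j. Define f : ℝ^n → ℝ by f(t) = -b(Σ t_k x_k, Σ t_k x_k) = Σ_{i,j} (-b(x_i,x_j)) t_i t_j. Then f(t) > 0 for all t in the open positive orthant ℝ^n_{>0}. -/

import Mathlib

/-- Let `b` be the nondegenerate symmetric bilinear form of signature `(p, q+1)`
given by a symmetric matrix `Q` on `ℝ^{p+q+1}`, and let `x₁,…,xₙ` (`n = p+q+1`) be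
a basis with `b(xᵢ, xⱼ) ≤ 0` for all `i, j`.  Then
`f(t) = -b(Σ tₖ xₖ, Σ tₖ xₖ)` is positive on the open positive orthant. -/
theorem quadratic_pos_on_orthant (p q : ℕ)
    (Q : Matrix (Fin (p + q + 1)) (Fin (p + q + 1)) ℝ) (hQ : Q.IsHermitian)
    (hsig_pos : Fintype.card {i // 0 < hQ.eigenvalues i} = p)
    (hsig_neg : Fintype.card {i // hQ.eigenvalues i < 0} = q + 1)
    (x : Module.Basis (Fin (p + q + 1)) ℝ (Fin (p + q + 1) → ℝ))
    (hgram : ∀ i j, dotProduct (x i) (Q.mulVec (x j)) ≤ 0) :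
    ∀ t : Fin (p + q + 1) → ℝ, (∀ i, 0 < t i) →
      0 < - dotProduct (∑ k, t k • x k) (Q.mulVec (∑ k, t k • x k)) := by
  -- First: Q is not the zero matrix, since it has a negative eigenvalue.
  have hQne : Q ≠ 0 := by
    intro h0
    have hcard : 0 < Fintype.card {i // hQ.eigenvalues i < 0} := by omega
    obtain ⟨i, hi⟩ := Fintype.card_pos_iff.mp hcard
    subst h0
    have hmv := hQ.mulVec_eigenvectorBasis i
    simp only [Matrix.zero_mulVec] at hmv
    have hne : (⇑(hQ.eigenvectorBasis i) : Fin (p+q+1) → ℝ) ≠ 0 :=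
      fun h => hQ.eigenvectorBasis.orthonormal.ne_zero i (by simpa using congrArg (WithLp.toLp 2) h)
    have : hQ.eigenvalues i = 0 := by
      by_contra hne0
      apply hne
      have := congrArg (fun v => (hQ.eigenvalues i)⁻¹ • v) hmv.symm
      simpa [smul_smul, inv_mul_cancel₀ hne0] using this
    linarith
  intro t ht
  set BL := Matrix.toBilin' Q with hBL
  have key : dotProduct (∑ k, t k • x k) (Q.mulVec (∑ k, t k • x k))
      = BL (∑ k, t k • x k) (∑ k, t k • x k) := (Matrix.toBilin'_apply' Q _ _).symm
  rw [key]
  have expand : BL (∑ k, t k • x k) (∑ k, t k • x k)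
      = ∑ i, ∑ j, t i * t j * BL (x i) (x j) := by
    simp only [map_sum, map_smul, LinearMap.sum_apply, LinearMap.smul_apply, smul_eq_mul,
      Finset.mul_sum]
    rw [Finset.sum_comm]
    exact Finset.sum_congr rfl fun i _ => Finset.sum_congr rfl fun j _ => by ring
  rw [expand]
  have hgram' : ∀ i j, BL (x i) (x j) ≤ 0 := by
    intro i j; rw [hBL, Matrix.toBilin'_apply']; exact hgram i j
  have hterm : ∀ (i j : Fin (p+q+1)), t i * t j * BL (x i) (x j) ≤ 0 :=
    fun i j => mul_nonpos_of_nonneg_of_nonpos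
      (mul_nonneg (ht i).le (ht j).le) (hgram' i j)
  have hle : ∑ i, ∑ j, t i * t j * BL (x i) (x j) ≤ 0 :=
    Finset.sum_nonpos fun i _ => Finset.sum_nonpos fun j _ => hterm i j
  rcases lt_or_eq_of_le hle with h | h
  · linarith
  · exfalso
    have hzero : ∀ i j, BL (x i) (x j) = 0 := by
      have h1 : ∀ i ∈ Finset.univ, ∑ j, t i * t j * BL (x i) (x j) = 0 :=
        (Finset.sum_eq_zero_iff_of_nonpos (fun i _ =>
          Finset.sum_nonpos fun j _ => hterm i j)).mp h
      intro i j
      have h2 := (Finset.sum_eq_zero_iff_of_nonpos (fun j _ => hterm i j)).mp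
        (h1 i (Finset.mem_univ i)) j (Finset.mem_univ j)
      have hpos : 0 < t i * t j := mul_pos (ht i) (ht j)
      rcases mul_eq_zero.mp h2 with h' | h'
      · exact absurd h' (ne_of_gt hpos)
      · exact h'
    apply hQne
    have hbil : Matrix.toBilin' Q = Matrix.toBilin' (0 : Matrix (Fin (p+q+1)) (Fin (p+q+1)) ℝ) := by
      rw [LinearEquiv.map_zero]
      apply LinearMap.ext_basis x x
      intro i j
      exact hzero i j
    exact Matrix.toBilin'.injective hbil
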